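/- arXiv:quant-ph/0611033 — 2 statements merged into one kernel-verified Lean document; each statement's English description precedes it below -/
import Mathlib

section
/- If R(ρ) = (1/m)·∑_{i=1}^m U_i ρ U_i† is an ε-randomizing map on d-dimensional states with respect to the trace norm (i.e. ‖R(ρ) − I/d‖₁ ≤ ε for all density matrices ρ), then m ≥ d(1 − ε/2). -/
open Matrix ComplexOrder

/-- The trace norm (sum of singular values) of a complex square matrix. -/
noncomputable def traceNorm {n : Type*} [Fintype n] [DecidableEq n] (M : Matrix n n ℂ) : ℝ :=
  ((Matrix.posSemidef_conjTranspose_mul_self M).1.eigenvectorUnitary.1 *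
    diagonal ((fun x : ℝ => (x : ℂ)) ∘ Real.sqrt ∘ (Matrix.posSemidef_conjTranspose_mul_self M).1.eigenvalues) *
    (star (Matrix.posSemidef_conjTranspose_mul_self M).1.eigenvectorUnitary : Matrix n n ℂ)).trace.re

/-- The Frobenius (Hilbert–Schmidt) norm of a complex square matrix. -/
noncomputable def frobNorm {n : Type*} [Fintype n] (M : Matrix n n ℂ) : ℝ :=
  Real.sqrt ((Mᴴ * M).trace.re)

section helpers
open scoped MatrixOrder in
lemma traceNorm_conj_diag {d : ℕ} (V : Matrix (Fin d) (Fin d) ℂ)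
    (h1 : V * Vᴴ = 1) (h2 : Vᴴ * V = 1) (f : Fin d → ℝ) :
    traceNorm (V * diagonal (fun i => (f i : ℂ)) * Vᴴ) = ∑ i, |f i| := by
  set M := V * diagonal (fun i => (f i : ℂ)) * Vᴴ with hMdef
  have hDh : (diagonal (fun i => (f i : ℂ)))ᴴ = diagonal (fun i => (f i : ℂ)) := by
    simp [diagonal_conjTranspose, Function.comp_def, Complex.conj_ofReal]
  have hd1 : diagonal (fun i => (f i : ℂ)) * diagonal (fun i => (f i : ℂ))
      = diagonal (fun i => ((f i : ℂ))^2) := by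
    rw [diagonal_mul_diagonal]
    exact congrArg diagonal (funext fun i => by ring)
  have hd2 : diagonal (fun i => ((|f i| : ℝ) : ℂ)) * diagonal (fun i => ((|f i| : ℝ) : ℂ))
      = diagonal (fun i => ((f i : ℂ))^2) := by
    rw [diagonal_mul_diagonal]
    exact congrArg diagonal (funext fun i => by
      rw [← Complex.ofReal_mul, abs_mul_abs_self, ← Complex.ofReal_pow, sq])
  have hMM : Mᴴ * M = V * diagonal (fun i => ((f i : ℂ))^2) * Vᴴ := by
    have hM' : Mᴴ = V * diagonal (fun i => (f i : ℂ)) * Vᴴ := by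
      rw [hMdef, conjTranspose_mul, conjTranspose_mul, conjTranspose_conjTranspose, hDh,
        Matrix.mul_assoc]
    rw [hM', hMdef]
    calc (V * diagonal (fun i => (f i : ℂ)) * Vᴴ) * (V * diagonal (fun i => (f i : ℂ)) * Vᴴ)
        = V * diagonal (fun i => (f i : ℂ)) * (Vᴴ * V) * diagonal (fun i => (f i : ℂ)) * Vᴴ := by
          simp only [Matrix.mul_assoc]
      _ = V * (diagonal (fun i => (f i : ℂ)) * diagonal (fun i => (f i : ℂ))) * Vᴴ := by
          rw [h2]; simp only [Matrix.mul_one, Matrix.mul_assoc]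
      _ = V * diagonal (fun i => ((f i : ℂ))^2) * Vᴴ := by rw [hd1]
  have hSpsd : PosSemidef (V * diagonal (fun i => ((|f i| : ℝ) : ℂ)) * Vᴴ) := by
    refine (posSemidef_diagonal_iff.mpr fun i => ?_).mul_mul_conjTranspose_same V
    simpa using abs_nonneg (f i)
  have hsq : (V * diagonal (fun i => ((|f i| : ℝ) : ℂ)) * Vᴴ)^2 = Mᴴ * M := by
    rw [hMM, pow_two]
    calc (V * diagonal (fun i => ((|f i| : ℝ) : ℂ)) * Vᴴ) * (V * diagonal (fun i => ((|f i| : ℝ) : ℂ)) * Vᴴ)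
        = V * diagonal (fun i => ((|f i| : ℝ) : ℂ)) * (Vᴴ * V) * diagonal (fun i => ((|f i| : ℝ) : ℂ)) * Vᴴ := by
          simp only [Matrix.mul_assoc]
      _ = V * (diagonal (fun i => ((|f i| : ℝ) : ℂ)) * diagonal (fun i => ((|f i| : ℝ) : ℂ))) * Vᴴ := by
          rw [h2]; simp only [Matrix.mul_one, Matrix.mul_assoc]
      _ = V * diagonal (fun i => ((f i : ℂ))^2) * Vᴴ := by rw [hd2]
  have hsqrt : V * diagonal (fun i => ((|f i| : ℝ) : ℂ)) * Vᴴ =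
      (Matrix.posSemidef_conjTranspose_mul_self M).1.eigenvectorUnitary.1 *
      diagonal ((fun x : ℝ => (x : ℂ)) ∘ Real.sqrt ∘ (Matrix.posSemidef_conjTranspose_mul_self M).1.eigenvalues) *
      (star (Matrix.posSemidef_conjTranspose_mul_self M).1.eigenvectorUnitary : Matrix (Fin d) (Fin d) ℂ) := by
    have hB : 0 ≤ V * diagonal (fun i => ((|f i| : ℝ) : ℂ)) * Vᴴ :=
      Matrix.nonneg_iff_posSemidef.mpr hSpsd
    have hA0 : 0 ≤ Mᴴ * M := Matrix.nonneg_iff_posSemidef.mpr (Matrix.posSemidef_conjTranspose_mul_self M)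
    rw [← CFC.sqrt_unique (a := Mᴴ * M) (by rw [← pow_two]; exact hsq) hB, CFC.sqrt_eq_real_sqrt _ hA0, cfcₙ_eq_cfc,
      (Matrix.posSemidef_conjTranspose_mul_self M).1.cfc_eq, IsHermitian.cfc, Unitary.conjStarAlgAut_apply]
    rfl
  rw [traceNorm, ← hsqrt]
  rw [Matrix.trace_mul_cycle, h2, Matrix.one_mul, trace_diagonal]
  simp

variable {d : ℕ}

lemma vecMulVec_mulVec' (a b x : Fin d → ℂ) :
    vecMulVec a b *ᵥ x = (b ⬝ᵥ x) • a := by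
  funext j
  simp [vecMulVec, mulVec, dotProduct, Finset.sum_mul, Finset.mul_sum, mul_comm, mul_assoc,
    mul_left_comm]

lemma sum_mulVec' {m : ℕ} (f : Fin m → Matrix (Fin d) (Fin d) ℂ) (x : Fin d → ℂ) :
    (∑ i, f i) *ᵥ x = ∑ i, f i *ᵥ x := by
  funext j
  simp [mulVec, dotProduct, Matrix.sum_apply, Finset.sum_mul]
  rw [Finset.sum_comm]

end helpers

theorem num_unitaries_lower_bound (d m : ℕ) (hd : 0 < d) (hm : 0 < m)
    (ε : ℝ) (hε0 : 0 ≤ ε) (hε2 : ε ≤ 2)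
    (U : Fin m → Matrix (Fin d) (Fin d) ℂ)
    (hU : ∀ i, (U i)ᴴ * U i = 1 ∧ U i * (U i)ᴴ = 1)
    (hrand : ∀ ρ : Matrix (Fin d) (Fin d) ℂ, ρ.PosSemidef → ρ.trace = 1 →
      traceNorm ((m : ℂ)⁻¹ • ∑ i, U i * ρ * (U i)ᴴ - (d : ℂ)⁻¹ • 1) ≤ ε) :
    (d : ℝ) * (1 - ε / 2) ≤ m := by
  classical
  set w : Fin d → ℂ := Pi.single ⟨0, hd⟩ 1 with hw
  set ρ : Matrix (Fin d) (Fin d) ℂ := vecMulVec w (star w) with hρ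
  have hρh : ρ.IsHermitian := by
    unfold ρ
    ext i j
    simp [vecMulVec, conjTranspose_apply, mul_comm]
  have hρpsd : ρ.PosSemidef := by
    refine PosSemidef.of_dotProduct_mulVec_nonneg hρh fun x => ?_
    rw [hρ, vecMulVec_mulVec', dotProduct_smul]
    have h1 : star x ⬝ᵥ w = star (star w ⬝ᵥ x) := by
      simp [dotProduct, mul_comm]
    rw [smul_eq_mul, h1]
    exact mul_star_self_nonneg ((star w ⬝ᵥ x : ℂ))
  have hρtr : ρ.trace = 1 := by
    rw [hρ]
    simp [Matrix.trace, Matrix.diag, vecMulVec_apply, hw, Pi.single_apply, Finset.sum_ite_eq]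
  -- the averaged state
  set S : Matrix (Fin d) (Fin d) ℂ := ∑ i, U i * ρ * (U i)ᴴ with hS
  set R : Matrix (Fin d) (Fin d) ℂ := (m : ℂ)⁻¹ • S with hR
  have hSpsd : S.PosSemidef := by
    rw [hS]
    refine Finset.sum_induction _ _ (fun a b ha hb => ha.add hb) Matrix.PosSemidef.zero ?_
    exact fun i _ => hρpsd.mul_mul_conjTranspose_same (U i)
  have hminv : (0:ℝ) ≤ (m:ℝ)⁻¹ := by positivity
  have hmC : ((m:ℂ))⁻¹ = (((m:ℝ)⁻¹ : ℝ) : ℂ) := by push_cast; ring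
  have hRpsd : R.PosSemidef := by
    refine PosSemidef.of_dotProduct_mulVec_nonneg ?_ ?_
    · rw [hR, IsHermitian, conjTranspose_smul, hSpsd.1.eq]
      congr 1
      rw [star_inv₀, star_natCast]
    · intro x
      rw [hR, smul_mulVec, dotProduct_smul, smul_eq_mul]
      refine mul_nonneg ?_ (hSpsd.dotProduct_mulVec_nonneg x)
      rw [hmC]
      exact Complex.zero_le_real.mpr hminv
  have hRtr : R.trace = 1 := by
    rw [hR, trace_smul, hS, trace_sum]
    have : ∀ i, (U i * ρ * (U i)ᴴ).trace = 1 := by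
      intro i
      rw [Matrix.trace_mul_cycle, (hU i).1, Matrix.one_mul, hρtr]
    rw [Finset.sum_congr rfl (fun i _ => this i)]
    simp
    rw [inv_mul_cancel₀]
    exact_mod_cast hm.ne'
  -- rank bound
  have hrank : R.rank ≤ m := by
    have hsub : LinearMap.range R.mulVecLin ≤
        Submodule.span ℂ (Set.range fun i => U i *ᵥ w) := by
      rintro y ⟨x, rfl⟩
      rw [mulVecLin_apply, hR, smul_mulVec, hS, sum_mulVec']
      refine Submodule.smul_mem _ _ (Submodule.sum_mem _ fun i _ => ?_)
      rw [← Matrix.mulVec_mulVec, ← Matrix.mulVec_mulVec, hρ, vecMulVec_mulVec',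
        Matrix.mulVec_smul]
      exact Submodule.smul_mem _ _ (Submodule.subset_span ⟨i, rfl⟩)
    calc R.rank ≤ Module.finrank ℂ (Submodule.span ℂ (Set.range fun i => U i *ᵥ w)) :=
          Submodule.finrank_mono hsub
      _ ≤ Fintype.card (Fin m) := finrank_range_le_card _
      _ = m := Fintype.card_fin m
  -- spectral decomposition of R
  have hRh := hRpsd.1
  set μ : Fin d → ℝ := hRh.eigenvalues with hμ
  set V : Matrix (Fin d) (Fin d) ℂ := (IsHermitian.eigenvectorUnitary hRh : Matrix (Fin d) (Fin d) ℂ) with hV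
  have hV1 : V * Vᴴ = 1 := mem_unitaryGroup_iff.mp (IsHermitian.eigenvectorUnitary hRh).2
  have hV2 : Vᴴ * V = 1 := mem_unitaryGroup_iff'.mp (IsHermitian.eigenvectorUnitary hRh).2
  have hspec : R = V * diagonal (fun i => (μ i : ℂ)) * Vᴴ := hRh.spectral_theorem
  -- eigenvalues are nonneg and sum to 1
  have hμ0 : ∀ i, 0 ≤ μ i := fun i => hRpsd.eigenvalues_nonneg i
  have hμsum : ∑ i, μ i = 1 := by
    have : R.trace = ∑ i, (μ i : ℂ) := by
      rw [hspec, Matrix.trace_mul_cycle, hV2, Matrix.one_mul, trace_diagonal]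
    rw [hRtr] at this
    have := congrArg Complex.re this.symm
    simpa using this
  -- trace norm computation
  have hA : (m : ℂ)⁻¹ • ∑ i, U i * ρ * (U i)ᴴ - (d : ℂ)⁻¹ • 1
      = V * diagonal (fun i => ((μ i - (d:ℝ)⁻¹ : ℝ) : ℂ)) * Vᴴ := by
    have h1 : ((d : ℂ)⁻¹ • 1 : Matrix (Fin d) (Fin d) ℂ)
        = V * diagonal (fun _ => (d : ℂ)⁻¹) * Vᴴ := by
      have : (diagonal (fun _ => (d : ℂ)⁻¹) : Matrix (Fin d) (Fin d) ℂ) = (d:ℂ)⁻¹ • 1 := by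
        ext i j
        by_cases h : i = j <;> simp [diagonal_apply, Matrix.one_apply, h]
      rw [this]
      rw [Matrix.mul_smul, Matrix.mul_one, Matrix.smul_mul, hV1]
    rw [← hS, ← hR, hspec, h1, ← Matrix.sub_mul, ← Matrix.mul_sub, diagonal_sub]
    congr 2
    funext i
    push_cast
    ring
  have htn : traceNorm ((m : ℂ)⁻¹ • ∑ i, U i * ρ * (U i)ᴴ - (d : ℂ)⁻¹ • 1)
      = ∑ i, |μ i - (d:ℝ)⁻¹| := by
    rw [hA]; exact traceNorm_conj_diag V hV1 hV2 _
  have hbound := hrand ρ hρpsd hρtr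
  rw [htn] at hbound
  -- count nonzero eigenvalues
  set k : ℕ := Fintype.card {i // μ i ≠ 0} with hk
  have hkm : k ≤ m := by
    rw [hk, ← hRh.rank_eq_card_non_zero_eigs]
    exact hrank
  have hkd : k ≤ d := by
    rw [hk]
    simpa using Fintype.card_subtype_le _
  -- the sum is at least 2 - 2k/d
  have hcard : (Finset.univ.filter fun i => μ i ≠ 0).card = k := by
    rw [hk, Fintype.card_subtype]
  have hcard0 : (Finset.univ.filter fun i => ¬ μ i ≠ 0).card = d - k := by
    have h2 := Finset.card_filter_add_card_filter_not
      (s := (Finset.univ : Finset (Fin d))) (p := fun i => μ i ≠ 0)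
    rw [Finset.card_univ, Fintype.card_fin, hcard] at h2
    omega
  have hsplit : ∑ i, |μ i - (d:ℝ)⁻¹|
      = ∑ i ∈ Finset.univ.filter (fun i => ¬ μ i ≠ 0), |μ i - (d:ℝ)⁻¹|
        + ∑ i ∈ Finset.univ.filter (fun i => μ i ≠ 0), |μ i - (d:ℝ)⁻¹| := by
    rw [add_comm]
    exact (Finset.sum_filter_add_sum_filter_not _ _ _).symm
  have hdinv : (0:ℝ) < (d:ℝ)⁻¹ := by positivity
  have h0part : ∑ i ∈ Finset.univ.filter (fun i => ¬ μ i ≠ 0), |μ i - (d:ℝ)⁻¹|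
      = ((d:ℝ) - k) * (d:ℝ)⁻¹ := by
    rw [Finset.sum_congr rfl (fun i hi => ?_), Finset.sum_const, hcard0]
    · rw [nsmul_eq_mul]
      congr 1
      have : (k:ℝ) ≤ d := by exact_mod_cast hkd
      push_cast [Nat.cast_sub hkd]
      ring
    · simp only [Finset.mem_filter, not_not] at hi
      rw [hi.2, zero_sub, abs_neg, abs_of_pos hdinv]
  have h1part : (1:ℝ) - k * (d:ℝ)⁻¹
      ≤ ∑ i ∈ Finset.univ.filter (fun i => μ i ≠ 0), |μ i - (d:ℝ)⁻¹| := by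
    have hle : ∑ i ∈ Finset.univ.filter (fun i => μ i ≠ 0), (μ i - (d:ℝ)⁻¹)
        ≤ ∑ i ∈ Finset.univ.filter (fun i => μ i ≠ 0), |μ i - (d:ℝ)⁻¹| :=
      Finset.sum_le_sum fun i _ => le_abs_self _
    refine le_trans (le_of_eq ?_) hle
    rw [Finset.sum_sub_distrib, Finset.sum_const, hcard, nsmul_eq_mul]
    congr 1
    rw [← hμsum]
    rw [Finset.sum_filter_of_ne]
    intro i _ h
    intro h0
    exact h (by rw [h0])
  -- final arithmetic
  have hkey : 2 - 2 * (k:ℝ) * (d:ℝ)⁻¹ ≤ ε := by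
    have : ((d:ℝ) - k) * (d:ℝ)⁻¹ + ((1:ℝ) - k * (d:ℝ)⁻¹) ≤ ∑ i, |μ i - (d:ℝ)⁻¹| := by
      rw [hsplit, h0part]
      exact add_le_add_right h1part _
    have hdd : (d:ℝ) * (d:ℝ)⁻¹ = 1 := by
      field_simp
    nlinarith [le_trans this hbound]
  have hdpos : (0:ℝ) < d := by exact_mod_cast hd
  have hkm' : (k:ℝ) ≤ m := by exact_mod_cast hkm
  have hdd : (d:ℝ) * (d:ℝ)⁻¹ = 1 := by field_simp
  nlinarith [hkey, hkm', hdpos]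
end

section
/- For nonzero u ∈ {0,1}^{rs}, the mod-2 scalar product ⟨u, s_{xy}⟩ equals ⟨p_u(x), y⟩, where p_u(x) = ∑_{j∈[s]} (∑_{i∈[r]} u_{ij} e_i) x^j is a nonzero polynomial over GF(2^r) of degree at most s−1. -/
/-- The mod-2 scalar product of the coordinate vectors of `w, z : F` with respect to a
fixed `GF(2)`-basis `b` of `F`. -/
noncomputable def dotF {r : ℕ} {F : Type*} [AddCommGroup F] [Module (ZMod 2) F]
    (b : Module.Basis (Fin r) (ZMod 2) F) (w z : F) : ZMod 2 :=
  ∑ i, b.repr w i * b.repr z i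

/-- The `(i,j)`-th bit of the string `s_{xy}` in the Alon–Goldreich–Håstad–Peralta
construction: `⟨eᵢ xʲ, y⟩`. -/
noncomputable def sBit {r s : ℕ} {F : Type*} [Field F] [Module (ZMod 2) F]
    (b : Module.Basis (Fin r) (ZMod 2) F) (x y : F) (p : Fin r × Fin s) : ZMod 2 :=
  dotF b (b p.1 * x ^ (p.2 : ℕ)) y

lemma zmod2_smul_mul {F : Type*} [Field F] [Module (ZMod 2) F]
    (c : ZMod 2) (w v : F) : (c • w) * v = c • (w * v) := by
  rcases ((by decide : ∀ d : ZMod 2, d = 0 ∨ d = 1) c) with rfl | rfl <;> simp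

lemma dotF_smul {r : ℕ} {F : Type*} [AddCommGroup F] [Module (ZMod 2) F]
    (b : Module.Basis (Fin r) (ZMod 2) F) (c : ZMod 2) (w z : F) :
    dotF b (c • w) z = c * dotF b w z := by
  simp [dotF, Finset.mul_sum, mul_assoc]

lemma dotF_sum {r : ℕ} {F : Type*} [AddCommGroup F] [Module (ZMod 2) F]
    (b : Module.Basis (Fin r) (ZMod 2) F) {ι : Type*} (t : Finset ι) (f : ι → F) (z : F) :
    dotF b (∑ i ∈ t, f i) z = ∑ i ∈ t, dotF b (f i) z := by
  simp [dotF, Finset.sum_mul]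
  rw [Finset.sum_comm]

open Polynomial in
theorem AGHP_inner_product_eq_poly (r s : ℕ) (hr : 0 < r) (hs : 0 < s)
    {F : Type*} [Field F] [Fintype F] [Module (ZMod 2) F]
    (b : Module.Basis (Fin r) (ZMod 2) F)
    (u : Fin r × Fin s → ZMod 2) (hu : u ≠ 0) :
    let p : F[X] := ∑ j : Fin s, C (∑ i : Fin r, u (i, j) • b i) * X ^ (j : ℕ)
    p ≠ 0 ∧ p.natDegree ≤ s - 1 ∧
      ∀ x y : F, ∑ q : Fin r × Fin s, u q * sBit b x y q = dotF b (p.eval x) y := by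
  intro p
  have hcoeff : ∀ j : Fin s, p.coeff (j : ℕ) = ∑ i : Fin r, u (i, j) • b i := by
    intro j
    simp only [p, Polynomial.finset_sum_coeff, Polynomial.coeff_C_mul,
      Polynomial.coeff_X_pow]
    rw [Finset.sum_eq_single j]
    · simp
    · intro k _ hk
      have : (j : ℕ) ≠ (k : ℕ) := fun h => hk (Fin.ext h.symm)
      simp [this]
    · simp
  refine ⟨?_, ?_, ?_⟩
  · intro hp
    apply hu
    funext q
    obtain ⟨i, j⟩ := q
    have h0 : (∑ i : Fin r, u (i, j) • b i) = 0 := by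
      rw [← hcoeff j, hp]; simp
    have := congrArg (fun w => b.repr w i) h0
    simpa [Finsupp.single_apply] using this
  · apply Polynomial.natDegree_sum_le_of_forall_le
    intro j _
    refine le_trans (Polynomial.natDegree_C_mul_le _ _) ?_
    rw [Polynomial.natDegree_X_pow]
    have := j.isLt; omega
  · intro x y
    have heval : p.eval x = ∑ j : Fin s, ∑ i : Fin r, u (i, j) • (b i * x ^ (j : ℕ)) := by
      simp only [p, Polynomial.eval_finset_sum, Polynomial.eval_mul, Polynomial.eval_C,
        Polynomial.eval_pow, Polynomial.eval_X, Finset.sum_mul]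
      refine Finset.sum_congr rfl fun j _ => Finset.sum_congr rfl fun i _ => ?_
      exact zmod2_smul_mul _ _ _
    rw [heval, dotF_sum]
    have : ∀ j : Fin s, dotF b (∑ i : Fin r, u (i, j) • (b i * x ^ (j : ℕ))) y
        = ∑ i : Fin r, u (i, j) * dotF b (b i * x ^ (j : ℕ)) y := by
      intro j; rw [dotF_sum]
      exact Finset.sum_congr rfl fun i _ => dotF_smul b _ _ _
    simp only [this]
    rw [Fintype.sum_prod_type, Finset.sum_comm]
    rfl
end
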